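/- Let μ be a Borel probability measure on ℝ with compact support, and let Γ ⊂ ℕ₀ be a spectrum for μ (i.e., {e^{2πiγx} : γ ∈ Γ} is an orthonormal basis of L²(μ)). Then the map sending e_γ to the monomial z^γ extends to a linear isometry of L²(μ) into the Hardy space H²(𝔻). -/

import Mathlib

open Complex Real MeasureTheory
open scoped ENNReal
attribute [local instance] Classical.propDecidable

lemma extKey (Γ : Set ℕ) (f : lp (fun _ : Γ => ℂ) 2) :
    (fun n : ℕ => ‖if h : n ∈ Γ then f ⟨n, h⟩ else 0‖ ^ (2 : ℝ≥0∞).toReal)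
      = Set.indicator Γ (fun n : ℕ => ‖if h : n ∈ Γ then f ⟨n, h⟩ else 0‖ ^ (2 : ℝ≥0∞).toReal) := by
  symm
  rw [Set.indicator_eq_self, Function.support_subset_iff']
  intro n hn
  rw [dif_neg hn, norm_zero, Real.zero_rpow (by simp)]

lemma extMem (Γ : Set ℕ) (f : lp (fun _ : Γ => ℂ) 2) :
    Memℓp (fun n : ℕ => if h : n ∈ Γ then f ⟨n, h⟩ else 0) 2 := by
  have hp : (0:ℝ) < (2 : ℝ≥0∞).toReal := by simp
  apply memℓp_gen
  rw [extKey Γ f, ← summable_subtype_iff_indicator]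
  have : ((fun n : ℕ => ‖if h : n ∈ Γ then f ⟨n, h⟩ else 0‖ ^ (2 : ℝ≥0∞).toReal) ∘ (Subtype.val : Γ → ℕ))
      = fun γ : Γ => ‖f γ‖ ^ (2 : ℝ≥0∞).toReal := by
    funext γ; simp only [Function.comp_apply, dif_pos γ.2]
  rw [show ((fun n : ℕ => ‖if h : n ∈ Γ then f ⟨n, h⟩ else 0‖ ^ (2 : ℝ≥0∞).toReal) ∘ (Subtype.val : Γ → ℕ)) = _ from this]
  exact (lp.memℓp f).summable hp

noncomputable def extLI (Γ : Set ℕ) : lp (fun _ : Γ => ℂ) 2 →ₗᵢ[ℂ] lp (fun _ : ℕ => ℂ) 2 where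
  toFun f := ⟨fun n => if h : n ∈ Γ then f ⟨n, h⟩ else 0, extMem Γ f⟩
  map_add' f g := by
    ext n
    simp only [lp.coeFn_add, Pi.add_apply]
    by_cases h : n ∈ Γ <;> simp [h]
  map_smul' c f := by
    ext n
    simp only [lp.coeFn_smul, Pi.smul_apply]
    by_cases h : n ∈ Γ <;> simp [h]
  norm_map' f := by
    have hp : (0:ℝ) < (2 : ℝ≥0∞).toReal := by simp
    have h1 := lp.norm_rpow_eq_tsum hp (⟨fun n => if h : n ∈ Γ then f ⟨n, h⟩ else 0, extMem Γ f⟩ : lp (fun _ : ℕ => ℂ) 2)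
    have h2 := lp.norm_rpow_eq_tsum hp f
    have h3 : (∑' n : ℕ, ‖if h : n ∈ Γ then f ⟨n, h⟩ else 0‖ ^ (2 : ℝ≥0∞).toReal)
        = ∑' γ : Γ, ‖f γ‖ ^ (2 : ℝ≥0∞).toReal := by
      rw [extKey Γ f, ← tsum_subtype]
      exact tsum_congr fun γ => by simp [dif_pos γ.2]
    have h4 : ‖(⟨fun n => if h : n ∈ Γ then f ⟨n, h⟩ else 0, extMem Γ f⟩ : lp (fun _ : ℕ => ℂ) 2)‖ ^ (2 : ℝ≥0∞).toReal = ‖f‖ ^ (2 : ℝ≥0∞).toReal := by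
      rw [h1, h2, h3]
    have ht : ((2:ℝ≥0∞)).toReal = 2 := by simp
    rw [ht] at h4
    rw [show (2:ℝ) = ((2:ℕ):ℝ) by norm_num, Real.rpow_natCast, Real.rpow_natCast] at h4
    show ‖(⟨fun n => if h : n ∈ Γ then f ⟨n, h⟩ else 0, extMem Γ f⟩ : lp (fun _ : ℕ => ℂ) 2)‖ = ‖f‖
    nlinarith [norm_nonneg (⟨fun n => if h : n ∈ Γ then f ⟨n, h⟩ else 0, extMem Γ f⟩ : lp (fun _ : ℕ => ℂ) 2), norm_nonneg f]

lemma extLI_apply (Γ : Set ℕ) (f : lp (fun _ : Γ => ℂ) 2) (n : ℕ) :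
    (extLI Γ f : ℕ → ℂ) n = if h : n ∈ Γ then f ⟨n, h⟩ else 0 := rfl

lemma extLI_single (Γ : Set ℕ) (γ : Γ) :
    extLI Γ (lp.single 2 γ 1) = lp.single 2 (γ : ℕ) 1 := by
  ext n
  rw [extLI_apply]
  by_cases h : n ∈ Γ
  · rw [dif_pos h, lp.single_apply, lp.single_apply]
    by_cases he : n = (γ : ℕ)
    · subst he
      simp
    · rw [Pi.single_eq_of_ne (fun hc => he (congrArg Subtype.val hc)), Pi.single_eq_of_ne he]
  · rw [dif_neg h, lp.single_apply, Pi.single_eq_of_ne (fun hc : n = (γ:ℕ) => h (hc ▸ γ.2))]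

/-- If `μ` is a compactly supported Borel probability measure on `ℝ` and
`Γ ⊆ ℕ` is a spectrum for `μ` (the exponentials `e_γ`, `γ ∈ Γ`, form an
orthonormal basis of `L²(μ)`), then `e_γ ↦ z^γ` extends to a linear isometry
of `L²(μ)` into the Hardy space `H²(𝔻)` (realized as `ℓ²(ℕ)` via Taylor
coefficients, where `z^γ` corresponds to the standard basis vector `δ_γ`). -/
theorem stmt4 (μ : Measure ℝ) [IsProbabilityMeasure μ]
    (hK : ∃ K : Set ℝ, IsCompact K ∧ μ Kᶜ = 0)
    (Γ : Set ℕ)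
    (hmem : ∀ n : ℕ, MemLp (fun x : ℝ => Complex.exp (2 * Real.pi * Complex.I * n * x)) 2 μ)
    (honb : Orthonormal ℂ (fun γ : Γ => (hmem (γ : ℕ)).toLp _))
    (hdense : ⊤ ≤ (Submodule.span ℂ
      (Set.range (fun γ : Γ => (hmem (γ : ℕ)).toLp _))).topologicalClosure) :
    ∃ J : Lp ℂ 2 μ →ₗᵢ[ℂ] lp (fun _ : ℕ => ℂ) 2,
      ∀ γ : Γ, J ((hmem (γ : ℕ)).toLp _) = lp.single 2 (γ : ℕ) 1 := by
  let B : HilbertBasis Γ ℂ (Lp ℂ 2 μ) := HilbertBasis.mk honb hdense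
  refine ⟨(extLI Γ).comp B.repr.toLinearIsometry, fun γ => ?_⟩
  have hb : B γ = (hmem (γ : ℕ)).toLp _ := congrFun (HilbertBasis.coe_mk honb hdense) γ
  have h1 : B.repr ((hmem (γ : ℕ)).toLp _) = lp.single 2 γ 1 := by
    rw [← hb]; exact B.repr_self γ
  show extLI Γ (B.repr ((hmem (γ : ℕ)).toLp _)) = _
  rw [h1, extLI_single]
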